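/- Let (V, g) be an n-dimensional real inner product space (n ≥ 2), φ, s real scalars with s ≠ 0, Ric a symmetric bilinear form on V, and set Z(i,j) = Ric(i,j) + φ·g(i,j). Suppose η ∈ V is nonzero and g(η,j)·Z(k,l) = g(η,l)·Z(k,j) for all j,k,l, and that the g-trace of Z equals s. Then Ric(i,j) = −φ·g(i,j) + s·T(i)·T(j) where T = η/‖η‖, i.e. Ric is of quasi-Einstein form. -/

import Mathlib

open scoped RealInnerProductSpace

/-- Proposition 2.3: with `Z = Ric + φ·g`, `η ≠ 0` satisfying
`g(η,j)·Z(k,l) = g(η,l)·Z(k,j)` and trace of `Z` equal to `s ≠ 0`,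
the Ricci form is quasi-Einstein: `Ric(i,j) = −φ·g(i,j) + s·T(i)·T(j)`
with `T = η/‖η‖`. -/
theorem stmt_2 {V : Type*} [NormedAddCommGroup V] [InnerProductSpace ℝ V]
    [FiniteDimensional ℝ V]
    {n : ℕ} (hn : 2 ≤ n) (hdim : Module.finrank ℝ V = n)
    (φ s : ℝ) (hs0 : s ≠ 0)
    (Ric : V →ₗ[ℝ] V →ₗ[ℝ] ℝ) (hRicsym : ∀ x y, Ric x y = Ric y x)
    (Z : V → V → ℝ) (hZ : ∀ i j, Z i j = Ric i j + φ * ⟪i, j⟫)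
    (η : V) (hη : η ≠ 0)
    (hrel : ∀ j k l, ⟪η, j⟫ * Z k l = ⟪η, l⟫ * Z k j)
    (b : OrthonormalBasis (Fin n) ℝ V)
    (hs : ∑ i, Z (b i) (b i) = s) :
    ∀ i j, Ric i j = -φ * ⟪i, j⟫ + s * (⟪η, i⟫ / ‖η‖) * (⟪η, j⟫ / ‖η‖) := by
  have hZsym : ∀ x y, Z x y = Z y x := by
    intro x y
    rw [hZ, hZ, hRicsym, real_inner_comm]
  have hn2 : (‖η‖ : ℝ)^2 ≠ 0 := pow_ne_zero 2 (norm_ne_zero_iff.mpr hη)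
  have hinner : ⟪η, η⟫ = ‖η‖^2 := real_inner_self_eq_norm_sq η
  -- Z k l = ⟪η,l⟫ * Z k η / ‖η‖²
  have key : ∀ k l, Z k l = ⟪η, l⟫ * Z k η / ‖η‖^2 := by
    intro k l
    have := hrel η k l
    rw [hinner] at this
    field_simp
    linarith [this]
  have key2 : ∀ k l, Z k l = ⟪η, k⟫ * ⟪η, l⟫ * Z η η / (‖η‖^2 * ‖η‖^2) := by
    intro k l
    rw [key k l, hZsym k η, key η k]
    ring
  have hn0 : ‖η‖ ≠ 0 := norm_ne_zero_iff.mpr hη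
  have hZηη : Z η η = s * ‖η‖^2 := by
    have h1 : ∑ i, Z (b i) (b i)
        = (∑ i, ⟪η, b i⟫ * ⟪b i, η⟫) * Z η η / (‖η‖^2 * ‖η‖^2) := by
      rw [Finset.sum_mul, Finset.sum_div]
      exact Finset.sum_congr rfl fun i _ => by
        rw [key2 (b i) (b i), real_inner_comm (b i) η]
    rw [h1, b.sum_inner_mul_inner η η, hinner] at hs
    have h2 : ‖η‖^2 * Z η η = ‖η‖^2 * (s * ‖η‖^2) := by
      field_simp at hs; rw [hs]; ring
    exact mul_left_cancel₀ hn2 h2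
  intro i j
  have h3 := key2 i j
  rw [hZηη, hZ] at h3
  have h2 : Ric i j = ⟪η, i⟫ * ⟪η, j⟫ * (s * ‖η‖^2) / (‖η‖^2 * ‖η‖^2) - φ * ⟪i, j⟫ := by
    linarith
  rw [h2]
  field_simp
  ring
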